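/- arXiv:hep-th/0101111 — 3 statements merged into one kernel-verified Lean document; each statement's English description precedes it below -/
import Mathlib

section
/- Let R be a (possibly noncommutative) unital ring and let D ∈ R. Suppose S is a subring of R such that D² commutes with every element of S (i.e. D²·a = a·D² for all a ∈ S). Then for every finite family of pairs (a_j, b_j) with a_j, b_j ∈ S satisfying Σ_j a_j·(D·b_j − b_j·D) = 0, one also has Σ_j (D·a_j − a_j·D)·(D·b_j − b_j·D) = 0. -/
/-- Sufficient Junk-free condition in second order: if `D ^ 2` commutes with every
element of a subring `S`, then any finite family `(a_j, b_j)` of elements of `S` with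
`∑ j, a j * (D * b j - b j * D) = 0` also satisfies
`∑ j, (D * a j - a j * D) * (D * b j - b j * D) = 0`. -/
theorem junk_free_of_sq_commutes {R : Type*} [Ring R] (D : R) (S : Subring R)
    (hD : ∀ a ∈ S, D ^ 2 * a = a * D ^ 2)
    {ι : Type*} (s : Finset ι) (a b : ι → R)
    (ha : ∀ j ∈ s, a j ∈ S) (hb : ∀ j ∈ s, b j ∈ S)
    (h : ∑ j ∈ s, a j * (D * b j - b j * D) = 0) :
    ∑ j ∈ s, (D * a j - a j * D) * (D * b j - b j * D) = 0 := by
  have key : ∀ j ∈ s, (D * a j - a j * D) * (D * b j - b j * D)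
      = D * (a j * (D * b j - b j * D)) + (a j * (D * b j - b j * D)) * D := by
    intro j hj
    have hb2 := hD (b j) (hb j hj)
    have : (D * a j - a j * D) * (D * b j - b j * D)
        = D * (a j * (D * b j - b j * D)) + (a j * (D * b j - b j * D)) * D
          + (a j * (b j * D ^ 2) - a j * (D ^ 2 * b j)) := by noncomm_ring
    rw [this, hb2]
    simp
  rw [Finset.sum_congr rfl key, Finset.sum_add_distrib, ← Finset.mul_sum,
    ← Finset.sum_mul, h, mul_zero, zero_mul, add_zero]
end

section
/- Let R be a unital ring, let D ∈ R, and suppose D² = c·1 for some central element c of R. Then for every finite family of pairs (a_j, b_j) of elements of R satisfying Σ_j a_j·(D·b_j − b_j·D) = 0, one also has Σ_j (D·a_j − a_j·D)·(D·b_j − b_j·D) = 0. -/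
/-- Junk-free condition when `D ^ 2 = c • 1` for a central element `c`: any finite
family `(a_j, b_j)` with `∑ j, a j * (D * b j - b j * D) = 0` also satisfies
`∑ j, (D * a j - a j * D) * (D * b j - b j * D) = 0`. -/
theorem junk_free_of_sq_eq_central {R : Type*} [Ring R] (D c : R)
    (hc : ∀ x : R, c * x = x * c) (hD : D ^ 2 = c * 1)
    {ι : Type*} (s : Finset ι) (a b : ι → R)
    (h : ∑ j ∈ s, a j * (D * b j - b j * D) = 0) :
    ∑ j ∈ s, (D * a j - a j * D) * (D * b j - b j * D) = 0 := by
  have h2 : D * D = c := by rw [← pow_two, hD, mul_one]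
  have key : ∀ j ∈ s, (D * a j - a j * D) * (D * b j - b j * D)
      = D * (a j * (D * b j - b j * D)) + (a j * (D * b j - b j * D)) * D := by
    intro j _
    have h4 : D * (D * b j) = b j * (D * D) := by rw [← mul_assoc, h2, hc]
    simp only [mul_sub, sub_mul, mul_assoc, h4]
    abel
  rw [Finset.sum_congr rfl key, Finset.sum_add_distrib, ← Finset.mul_sum,
    ← Finset.sum_mul, h, mul_zero, zero_mul, add_zero]
end

section
/- Let d be a positive natural number, V a complex vector space, and γ⁺, γ⁻ : Fin d → End(V) linear maps satisfying the Cl(2d) relations: γ⁺_μ ∘ γ⁺_ν + γ⁺_ν ∘ γ⁺_μ = 0, γ⁻_μ ∘ γ⁻_ν + γ⁻_ν ∘ γ⁻_μ = 0, and γ⁺_μ ∘ γ⁻_ν + γ⁻_ν ∘ γ⁺_μ = δ_{μν}·id_V for all μ, ν. Define the operator D on functions ψ : ℤ^d → V by (Dψ)(x) = Σ_{μ=1}^{d} ( γ⁺_μ(ψ(x + ê_μ)) + γ⁻_μ(ψ(x − ê_μ)) ), where ê_μ ∈ ℤ^d is the μ-th standard unit vector. Then for every ψ : ℤ^d → V and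 every x ∈ ℤ^d, (D(Dψ))(x) = d · ψ(x). -/
private lemma half_cancel {V : Type*} [AddCommGroup V] [Module ℂ V] {v : V}
    (h : v + v = 0) : v = 0 := by
  have h2 : (2 : ℂ) • v = 0 := by rw [two_smul]; exact h
  calc v = (2 : ℂ)⁻¹ • ((2 : ℂ) • v) := by rw [smul_smul]; norm_num
    _ = 0 := by rw [h2, smul_zero]

private lemma sum_antisym {d : ℕ} {V : Type*} [AddCommGroup V] [Module ℂ V]
    (f : Fin d → Fin d → V) (h : ∀ μ ν, f μ ν + f ν μ = 0) :
    (∑ μ, ∑ ν, f μ ν) = 0 := by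
  apply half_cancel
  nth_rewrite 2 [Finset.sum_comm]
  rw [← Finset.sum_add_distrib]
  have : ∀ μ : Fin d, (∑ ν, f μ ν) + (∑ ν, f ν μ) = 0 := by
    intro μ
    rw [← Finset.sum_add_distrib]
    simp [h]
  simp [this]

/-- The Dirac–Connes operator `D = ∑_μ (Γ⁺_μ T⁺_μ + Γ⁻_μ T⁻_μ)` on the lattice `ℤ^d`,
built from endomorphisms satisfying the `Cl(2d)` relations, satisfies the geometric
square-root condition `D² = d·1`. -/
theorem lattice_dirac_connes_sq {d : ℕ} (hd : 0 < d)
    {V : Type*} [AddCommGroup V] [Module ℂ V]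
    (γp γm : Fin d → Module.End ℂ V)
    (hpp : ∀ μ ν, γp μ ∘ₗ γp ν + γp ν ∘ₗ γp μ = 0)
    (hmm : ∀ μ ν, γm μ ∘ₗ γm ν + γm ν ∘ₗ γm μ = 0)
    (hpm : ∀ μ ν, γp μ ∘ₗ γm ν + γm ν ∘ₗ γp μ =
      if μ = ν then LinearMap.id else 0)
    (D : ((Fin d → ℤ) → V) → ((Fin d → ℤ) → V))
    (hD : ∀ (ψ : (Fin d → ℤ) → V) (x : Fin d → ℤ),
      D ψ x = ∑ μ, (γp μ (ψ (x + Pi.single μ 1)) + γm μ (ψ (x - Pi.single μ 1)))) :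
    ∀ (ψ : (Fin d → ℤ) → V) (x : Fin d → ℤ), D (D ψ) x = d • ψ x := by
  intro ψ x
  set e : Fin d → (Fin d → ℤ) := fun μ => Pi.single μ 1 with he
  -- pointwise Clifford relations
  have Hpp : ∀ μ ν (v : V), γp μ (γp ν v) + γp ν (γp μ v) = 0 := by
    intro μ ν v
    have h := LinearMap.congr_fun (hpp μ ν) v
    simpa using h
  have Hmm : ∀ μ ν (v : V), γm μ (γm ν v) + γm ν (γm μ v) = 0 := by
    intro μ ν v
    have h := LinearMap.congr_fun (hmm μ ν) v
    simpa using h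
  have Hpm : ∀ μ ν (v : V), γp μ (γm ν v) + γm ν (γp μ v) = if μ = ν then v else 0 := by
    intro μ ν v
    have h := LinearMap.congr_fun (hpm μ ν) v
    split_ifs with hμν <;> simp [hμν] at h ⊢ <;> simpa using h
  rw [hD]
  have step : ∀ μ : Fin d,
      γp μ (D ψ (x + e μ)) + γm μ (D ψ (x - e μ)) =
      (∑ ν, γp μ (γp ν (ψ (x + e μ + e ν)))) +
      (∑ ν, γp μ (γm ν (ψ (x + e μ - e ν)))) +
      ((∑ ν, γm μ (γp ν (ψ (x - e μ + e ν)))) +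
       (∑ ν, γm μ (γm ν (ψ (x - e μ - e ν))))) := by
    intro μ
    rw [hD, hD, map_sum, map_sum]
    simp only [map_add]
    rw [Finset.sum_add_distrib, Finset.sum_add_distrib]
  rw [Finset.sum_congr rfl (fun μ _ => step μ)]
  rw [Finset.sum_add_distrib, Finset.sum_add_distrib, Finset.sum_add_distrib]
  have SA : (∑ μ, ∑ ν, γp μ (γp ν (ψ (x + e μ + e ν)))) = 0 := by
    apply sum_antisym
    intro μ ν
    rw [show x + e ν + e μ = x + e μ + e ν by abel]
    exact Hpp μ ν _
  have SD : (∑ μ, ∑ ν, γm μ (γm ν (ψ (x - e μ - e ν)))) = 0 := by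
    apply sum_antisym
    intro μ ν
    rw [show x - e ν - e μ = x - e μ - e ν by abel]
    exact Hmm μ ν _
  have SBC : (∑ μ, ∑ ν, γp μ (γm ν (ψ (x + e μ - e ν)))) +
      (∑ μ, ∑ ν, γm μ (γp ν (ψ (x - e μ + e ν)))) = d • ψ x := by
    nth_rewrite 2 [Finset.sum_comm]
    rw [← Finset.sum_add_distrib]
    have inner : ∀ μ : Fin d,
        (∑ ν, γp μ (γm ν (ψ (x + e μ - e ν)))) +
        (∑ ν, γm ν (γp μ (ψ (x - e ν + e μ)))) = ψ x := by
      intro μ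
      rw [← Finset.sum_add_distrib]
      have : ∀ ν : Fin d,
          γp μ (γm ν (ψ (x + e μ - e ν))) + γm ν (γp μ (ψ (x - e ν + e μ))) =
          if μ = ν then ψ x else 0 := by
        intro ν
        rw [show x - e ν + e μ = x + e μ - e ν by abel]
        rw [Hpm μ ν]
        split_ifs with hμν
        · subst hμν; rw [show x + e μ - e μ = x by abel]
        · rfl
      rw [Finset.sum_congr rfl (fun ν _ => this ν)]
      simp
    rw [Finset.sum_congr rfl (fun μ _ => inner μ)]
    simp [Finset.card_univ]
  rw [SA, SD, zero_add, add_zero]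
  exact SBC
end
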